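/- Let A be a finite set of atoms, let P be a proper A-program, and let a ∈ At(P) \ A. Then A ∪ {a} is an A-based stable model of P if and only if F(a) = 0, G(a) > 0, and there exists a Horn program Q ∈ 𝒫(A) such that H(r,a) > 0 for every rule r ∈ Q. -/
import Mathlib


open scoped Classical

noncomputable section

/-- A propositional logic program rule: a head atom, a finite positive body and a
finite negative body. -/
structure LPRule (α : Type) where
  head : α
  pos : Finset α
  neg : Finset α
deriving DecidableEq

/-- A logic program is a finite set of rules. -/
abbrev LProgram (α : Type) := Finset (LPRule α)

variable {α : Type} [DecidableEq α]

/-- `horn r`: the Horn rule with the same head and positive body as `r`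
and empty negative body. -/
def LPRule.horn (r : LPRule α) : LPRule α := ⟨r.head, r.pos, ∅⟩

/-- A rule `r` is proper if `h(r) ∉ b⁺(r)` and `b⁺(r) ∩ b⁻(r) = ∅`. -/
def LPRule.proper (r : LPRule α) : Prop := r.head ∉ r.pos ∧ r.pos ∩ r.neg = ∅

/-- `At(P)`: the set of atoms occurring in `P`. -/
def atomsP (P : LProgram α) : Finset α := P.sup (fun r => insert r.head (r.pos ∪ r.neg))

/-- `h(P)`: the set of heads of rules of `P`. -/
def headsP (P : LProgram α) : Finset α := P.image LPRule.head

/-- `Neg(P)`: the set of atoms occurring negated in `P`. -/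
def negP (P : LProgram α) : Finset α := P.sup LPRule.neg

/-- The least model of a (Horn) program `Q`, given as a set of rules (negative bodies
are ignored; Horn rules have empty negative bodies): the least set `M` of atoms such
that `h(r) ∈ M` whenever `r ∈ Q` and `b⁺(r) ⊆ M`. -/
def LM (Q : Set (LPRule α)) : Set α :=
  ⋂₀ {M : Set α | ∀ r ∈ Q, (↑r.pos : Set α) ⊆ M → r.head ∈ M}

/-- The reduct `P^S`: delete every rule whose negative body meets `S` and remove the
negative bodies of the remaining rules. -/
def reduct (P : LProgram α) (S : Set α) : Set (LPRule α) :=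
  LPRule.horn '' {r | r ∈ P ∧ (↑r.neg : Set α) ∩ S = ∅}

/-- `M` is a stable model of `P` if `M = LM (P^M)`. -/
def isStable (P : LProgram α) (M : Set α) : Prop :=
  M = LM (reduct P M)

/-- `P(A)`: the rules `r` of `P` with `b⁻(r) ∩ A = ∅` and `b⁺(r) ⊆ A`. -/
def progA (P : LProgram α) (A : Set α) : LProgram α :=
  P.filter (fun r => (↑r.pos : Set α) ⊆ A ∧ (↑r.neg : Set α) ∩ A = ∅)

/-- `M` is an `A`-based stable model of `P`: `M` is a stable model of `P` of the form
`A ∪ {a}` for some atom `a ∉ A`, and `M ⊆ LM (P(A)^M)`. -/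
def isABased (P : LProgram α) (A M : Set α) : Prop :=
  isStable P M ∧ ∃ a, a ∉ A ∧ M = A ∪ {a} ∧ M ⊆ LM (reduct (progA P A) M)

/-- `F(a) = 1` if there is a rule `s ∈ P` with `h(s) ∉ A ∪ {a}` and `a ∉ b⁻(s)`,
and `F(a) = 0` otherwise. -/
def Fval (P : LProgram α) (A : Set α) (a : α) : ℕ :=
  if ∃ s ∈ P, s.head ∉ A ∪ {a} ∧ a ∉ s.neg then 1 else 0

/-- `G(a)`: the number of rules `s ∈ P` with `h(s) = a` and `a ∉ b⁻(s)`. -/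
def Gval (P : LProgram α) (a : α) : ℕ :=
  (P.filter (fun s => s.head = a ∧ a ∉ s.neg)).card

/-- `H(r,a) = 1` if there is a rule `s ∈ P` with `horn(s) = r` and `a ∉ b⁻(s)`,
and `H(r,a) = 0` otherwise. -/
def Hval (P : LProgram α) (r : LPRule α) (a : α) : ℕ :=
  if ∃ s ∈ P, s.horn = r ∧ a ∉ s.neg then 1 else 0

/-- `R(A)`: the set of all proper Horn rules whose head and positive body use only
atoms of `A`. -/
def RA (A : Finset α) : Set (LPRule α) :=
  {r | r.neg = ∅ ∧ r.head ∈ A ∧ r.pos ⊆ A ∧ r.proper}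

lemma LM_least (Q : Set (LPRule α)) {M : Set α}
    (hM : ∀ r ∈ Q, (↑r.pos : Set α) ⊆ M → r.head ∈ M) : LM Q ⊆ M :=
  Set.sInter_subset_of_mem hM

lemma LM_closed (Q : Set (LPRule α)) {r : LPRule α} (hr : r ∈ Q)
    (hpos : (↑r.pos : Set α) ⊆ LM Q) : r.head ∈ LM Q := by
  simp only [LM, Set.mem_sInter, Set.mem_setOf_eq]
  intro M hM
  exact hM r hr (hpos.trans (Set.sInter_subset_of_mem hM))

lemma LM_mono {Q R : Set (LPRule α)} (h : Q ⊆ R) : LM Q ⊆ LM R :=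
  Set.sInter_subset_sInter (fun M hM r hr => hM r (h hr))

/-- for a finite set of atoms `A`, a proper `A`-program `P` and
`a ∈ At(P) \ A`: `A ∪ {a}` is an `A`-based stable model of `P` iff `F(a) = 0`,
`G(a) > 0`, and there is a Horn program `Q ∈ 𝒫(A)` (i.e. `Q ⊆ R(A)` with `LM(Q) = A`)
such that `H(r,a) > 0` for every rule `r ∈ Q`. -/
theorem abased_iff_FGH (A : Finset α) (P : LProgram α)
    (hproper : ∀ r ∈ P, r.proper)
    (hAprog : ∀ r ∈ P, (↑r.pos : Set α) ⊆ ↑A ∧ (↑r.neg : Set α) ∩ ↑A = ∅)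
    (a : α) (haP : a ∈ atomsP P) (haA : a ∉ A) :
    isABased P ↑A (↑A ∪ {a}) ↔
      (Fval P ↑A a = 0 ∧ 0 < Gval P a ∧
        ∃ Q : LProgram α, ↑Q ⊆ RA A ∧ LM (↑Q : Set (LPRule α)) = (↑A : Set α) ∧
          ∀ r ∈ Q, 0 < Hval P r a) := by
  classical
  set M : Set α := ↑A ∪ {a} with hMdef
  have hprogA : progA P ↑A = P := Finset.filter_true_of_mem hAprog
  have hnegM : ∀ s ∈ P, ((↑s.neg : Set α) ∩ M = ∅ ↔ a ∉ s.neg) := by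
    intro s hs
    constructor
    · intro h hmem
      have : a ∈ (↑s.neg : Set α) ∩ M := ⟨by exact_mod_cast hmem, Or.inr rfl⟩
      rw [h] at this
      exact this
    · intro h
      ext x
      simp only [Set.mem_inter_iff, Set.mem_empty_iff_false, iff_false, not_and]
      intro hx hxM
      rcases hxM with hxA | hxa
      · have h2 := (hAprog s hs).2
        have : x ∈ (↑s.neg : Set α) ∩ ↑A := ⟨hx, hxA⟩
        rw [h2] at this
        exact this
      · rw [Set.mem_singleton_iff] at hxa
        subst hxa
        exact h (by exact_mod_cast hx)
  have hmemRed : ∀ r, r ∈ reduct P M ↔ ∃ s ∈ P, a ∉ s.neg ∧ LPRule.horn s = r := by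
    intro r
    simp only [reduct, Set.mem_image, Set.mem_setOf_eq]
    constructor
    · rintro ⟨s, ⟨hsP, hneg⟩, rfl⟩
      exact ⟨s, hsP, (hnegM s hsP).1 hneg, rfl⟩
    · rintro ⟨s, hsP, hneg, rfl⟩
      exact ⟨s, ⟨hsP, (hnegM s hsP).2 hneg⟩, rfl⟩
  constructor
  · rintro ⟨hst, -⟩
    have hstable : M = LM (reduct P M) := hst
    have hF : ∀ s ∈ P, a ∉ s.neg → s.head ∈ M := by
      intro s hs hneg
      have hr : s.horn ∈ reduct P M := (hmemRed _).2 ⟨s, hs, hneg, rfl⟩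
      have hpos : (↑s.horn.pos : Set α) ⊆ LM (reduct P M) := by
        rw [← hstable]
        exact fun x hx => Or.inl ((hAprog s hs).1 hx)
      have hh := LM_closed _ hr hpos
      rw [← hstable] at hh
      exact hh
    have hF0 : Fval P ↑A a = 0 := by
      rw [Fval, if_neg]
      rintro ⟨s, hs, hhead, hneg⟩
      exact hhead (hF s hs hneg)
    have hG : 0 < Gval P a := by
      rw [Gval, Finset.card_pos]
      by_contra hemp
      rw [Finset.not_nonempty_iff_eq_empty] at hemp
      have hnoG : ∀ s ∈ P, s.head = a → a ∈ s.neg := by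
        intro s hs hh
        by_contra hn
        have : s ∈ P.filter (fun s => s.head = a ∧ a ∉ s.neg) :=
          Finset.mem_filter.2 ⟨hs, hh, hn⟩
        rw [hemp] at this
        exact absurd this (Finset.notMem_empty s)
      have hsub : LM (reduct P M) ⊆ ↑A := by
        apply LM_least
        intro r hr _
        obtain ⟨s, hs, hneg, rfl⟩ := (hmemRed r).1 hr
        rcases hF s hs hneg with h | h
        · exact h
        · rw [Set.mem_singleton_iff] at h
          exact absurd (hnoG s hs h) hneg
      have ha : a ∈ LM (reduct P M) := by
        rw [← hstable]; exact Or.inr rfl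
      exact haA (by exact_mod_cast hsub ha)
    set Q₀ : LProgram α :=
      (P.filter (fun s => s.head ∈ A ∧ a ∉ s.neg)).image LPRule.horn with hQ₀
    have hmemQ₀ : ∀ r, r ∈ Q₀ ↔ ∃ s ∈ P, s.head ∈ A ∧ a ∉ s.neg ∧ s.horn = r := by
      intro r
      simp only [hQ₀, Finset.mem_image, Finset.mem_filter]
      constructor
      · rintro ⟨s, ⟨hs, hh, hn⟩, rfl⟩; exact ⟨s, hs, hh, hn, rfl⟩
      · rintro ⟨s, hs, hh, hn, rfl⟩; exact ⟨s, ⟨hs, hh, hn⟩, rfl⟩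
    refine ⟨hF0, hG, Q₀, ?_, ?_, ?_⟩
    · intro r hr
      obtain ⟨s, hs, hh, hn, rfl⟩ := (hmemQ₀ r).1 (by exact_mod_cast hr)
      refine ⟨rfl, hh, ?_, (hproper s hs).1, Finset.inter_empty _⟩
      exact_mod_cast (hAprog s hs).1
    · apply Set.Subset.antisymm
      · apply LM_least
        intro r hr _
        obtain ⟨s, hs, hh, hn, rfl⟩ := (hmemQ₀ r).1 (by exact_mod_cast hr)
        exact_mod_cast hh
      · intro x hx
        have hxM : x ∈ LM (reduct P M) := by rw [← hstable]; exact Or.inl hx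
        have key : LM (reduct P M) ⊆ LM (↑Q₀ : Set (LPRule α)) ∪ {a} := by
          apply LM_least
          intro r hr hpos
          obtain ⟨s, hs, hneg, rfl⟩ := (hmemRed r).1 hr
          rcases hF s hs hneg with h | h
          · left
            refine LM_closed (↑Q₀ : Set (LPRule α))
              (show s.horn ∈ (↑Q₀ : Set (LPRule α)) from
                by exact_mod_cast (hmemQ₀ s.horn).2 ⟨s, hs, by exact_mod_cast h, hneg, rfl⟩) ?_
            intro y hy
            rcases hpos hy with h2 | h2
            · exact h2
            · exfalso
              rw [Set.mem_singleton_iff] at h2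
              subst h2
              have : y ∈ (↑A : Set α) := (hAprog s hs).1 hy
              exact haA (by exact_mod_cast this)
          · right; exact h
        rcases key hxM with h | h
        · exact h
        · rw [Set.mem_singleton_iff] at h
          subst h
          exact absurd (by exact_mod_cast hx) haA
    · intro r hr
      obtain ⟨s, hs, hh, hn, rfl⟩ := (hmemQ₀ r).1 hr
      rw [Hval, if_pos ⟨s, hs, rfl, hn⟩]
      exact one_pos
  · rintro ⟨hF0, hG, Q, hQRA, hQLM, hQH⟩
    have hF : ∀ s ∈ P, a ∉ s.neg → s.head ∈ M := by
      intro s hs hneg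
      by_contra hh
      rw [Fval, if_pos ⟨s, hs, hh, hneg⟩] at hF0
      exact one_ne_zero hF0
    have hQRed : (↑Q : Set (LPRule α)) ⊆ reduct P M := by
      intro r hr
      have hpos := hQH r (by exact_mod_cast hr)
      have hex : ∃ s ∈ P, s.horn = r ∧ a ∉ s.neg := by
        by_contra hne
        rw [Hval, if_neg hne] at hpos
        exact lt_irrefl 0 hpos
      obtain ⟨s, hs, hhorn, hn⟩ := hex
      exact (hmemRed r).2 ⟨s, hs, hn, hhorn⟩
    have hup : LM (reduct P M) ⊆ M := by
      apply LM_least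
      intro r hr _
      obtain ⟨s, hs, hneg, rfl⟩ := (hmemRed r).1 hr
      exact hF s hs hneg
    have hA : (↑A : Set α) ⊆ LM (reduct P M) := hQLM ▸ LM_mono hQRed
    have ha : a ∈ LM (reduct P M) := by
      rw [Gval, Finset.card_pos] at hG
      obtain ⟨s, hsf⟩ := hG
      obtain ⟨hs, hh, hn⟩ := Finset.mem_filter.1 hsf
      have hr : s.horn ∈ reduct P M := (hmemRed _).2 ⟨s, hs, hn, rfl⟩
      have hcl := LM_closed _ hr (fun x hx => hA ((hAprog s hs).1 hx))
      rwa [show s.horn.head = a from hh] at hcl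
    have hstable : M = LM (reduct P M) := by
      apply Set.Subset.antisymm
      · rintro x (hx | hx)
        · exact hA hx
        · rw [Set.mem_singleton_iff] at hx
          subst hx
          exact ha
      · exact hup
    refine ⟨hstable, a, (by exact_mod_cast haA), rfl, ?_⟩
    rw [hprogA, ← hstable]
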